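/- Let 𝒫 be a collection of finite subsets of a set A (polygonalisations) and define, for P ∈ 𝒫 and α ∈ P, that α is removable from P if P \ {α} ∈ 𝒫. Suppose e₁, …, e_k (k ≥ 3) are edges of the inclusion graph incident to P with e_i = {P, Q_i} and arc(e_i) = α_i pairwise distinct, such that every (k−1)-subset of {α_1, …, α_k} satisfies: P with that subset removed (if all Q_i ⊆ P) or added lies in 𝒫 together with all intermediate sets, but the full set {α_1,…,α_k} does not extend to a k-cube. If for some i we had Q_i ⊋ P (i.e. α_i ∉ P and addable) and α_i is disjoint-compatible with all elements of the top vertex C⁺ of a (k−1)-cube containing the other k−1 edges, then C⁺ ∪ {α_i} ∈ 𝒫 and the interval [C⁻, C⁺ ∪ {α_i}] is a k-cube containing all k edges — a contradiction. Hence in a positive curvature system all edges point downward: P ⊋ Q_i for every i. -/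
import Mathlib


/-- Positive curvature criterion (abstract form): in a collection `Pols` of
finite sets closed under unions below a common superset, intersections above a
common subset, and with the upwards addability property of Remark 2.2, suppose
`e_i = {P, Q i}` (`i < k`, `k ≥ 3`) are edges at `P` with pairwise distinct
labels, such that for each `j` the other `k - 1` edges lie in an embedded
`(k-1)`-cube (an interval of `Pols` of height `k - 1` containing `P` and the
`Q i`, `i ≠ j`), but the whole family lies in no embedded `k`-cube.  Then all
edges point downward: `Q i ⊊ P` for every `i`. -/
theorem positive_curvature_edges_point_down {A : Type*} [DecidableEq A]
    (Pols : Set (Finset A))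
    (hUnion : ∀ P Q R : Finset A, P ∈ Pols → Q ∈ Pols → R ∈ Pols → P ⊆ R → Q ⊆ R → P ∪ Q ∈ Pols)
    (hInter : ∀ P Q R : Finset A, P ∈ Pols → Q ∈ Pols → R ∈ Pols → R ⊆ P → R ⊆ Q → P ∩ Q ∈ Pols)
    (hUp : ∀ (P Q : Finset A) (a : A), P ∈ Pols → Q ∈ Pols → P ⊆ Q →
      insert a P ∈ Pols → insert a Q ∈ Pols)
    (k : ℕ) (hk : 3 ≤ k)
    (P : Finset A) (hP : P ∈ Pols)
    (Q : Fin k → Finset A) (hQ : ∀ i, Q i ∈ Pols)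
    (hadj : ∀ i, (symmDiff P (Q i)).card = 1)
    (hlabels : Function.Injective fun i => symmDiff P (Q i))
    (hsubcubes : ∀ j : Fin k, ∃ Cm Cp : Finset A,
      Cm ∈ Pols ∧ Cp ∈ Pols ∧ Cm ⊆ Cp ∧ Cp.card = Cm.card + (k - 1) ∧
      (∀ R : Finset A, Cm ⊆ R → R ⊆ Cp → R ∈ Pols) ∧
      Cm ⊆ P ∧ P ⊆ Cp ∧ ∀ i, i ≠ j → Cm ⊆ Q i ∧ Q i ⊆ Cp)
    (hnocube : ¬ ∃ Cm Cp : Finset A,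
      Cm ∈ Pols ∧ Cp ∈ Pols ∧ Cm ⊆ Cp ∧ Cp.card = Cm.card + k ∧
      (∀ R : Finset A, Cm ⊆ R → R ⊆ Cp → R ∈ Pols) ∧
      Cm ⊆ P ∧ P ⊆ Cp ∧ ∀ i, Cm ⊆ Q i ∧ Q i ⊆ Cp) :
    ∀ i, Q i ⊂ P := by
  have hdich : ∀ i, Q i ⊂ P ∨ ∃ a, a ∉ P ∧ Q i = insert a P := by
    intro i
    obtain ⟨α, hα⟩ := Finset.card_eq_one.mp (hadj i)
    have hαmem : α ∈ symmDiff P (Q i) := by rw [hα]; exact Finset.mem_singleton_self α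
    rw [Finset.mem_symmDiff] at hαmem
    rcases hαmem with ⟨hαP, hαQ⟩ | ⟨hαQ, hαP⟩
    · left
      constructor
      · intro x hx
        by_contra hxP
        have hxd : x ∈ symmDiff P (Q i) := Finset.mem_symmDiff.mpr (Or.inr ⟨hx, hxP⟩)
        rw [hα, Finset.mem_singleton] at hxd
        exact hαQ (hxd ▸ hx)
      · intro hPQ
        exact hαQ (hPQ hαP)
    · right
      refine ⟨α, hαP, ?_⟩
      ext x
      simp only [Finset.mem_insert]
      constructor
      · intro hx
        by_cases hxP : x ∈ P
        · exact Or.inr hxP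
        · left
          have hxd : x ∈ symmDiff P (Q i) := Finset.mem_symmDiff.mpr (Or.inr ⟨hx, hxP⟩)
          rw [hα, Finset.mem_singleton] at hxd; exact hxd
      · rintro (rfl | hx)
        · exact hαQ
        · by_contra hxQ
          have hxd : x ∈ symmDiff P (Q i) := Finset.mem_symmDiff.mpr (Or.inl ⟨hx, hxQ⟩)
          rw [hα, Finset.mem_singleton] at hxd
          exact hαP (hxd ▸ hx)
  intro i₀
  by_contra hnot
  rcases hdich i₀ with h | ⟨a, haP, hQa⟩
  · exact hnot h
  obtain ⟨Cm, Cp, hCm, hCp, hCmCp, hcard, hint, hCmP, hPCp, hedge⟩ := hsubcubes i₀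
  have hb : ∀ i, ∃ α, symmDiff P (Q i) = {α} := fun i => Finset.card_eq_one.mp (hadj i)
  choose b hbspec using hb
  have hbinj : Function.Injective b := by
    intro i j hij
    apply hlabels
    show symmDiff P (Q i) = symmDiff P (Q j)
    rw [hbspec i, hbspec j, hij]
  have hbmem : ∀ i, b i ∈ symmDiff P (Q i) := fun i => by
    rw [hbspec i]; exact Finset.mem_singleton_self _
  have hba : b i₀ = a := by
    have hmem : a ∈ symmDiff P (Q i₀) := Finset.mem_symmDiff.mpr
      (Or.inr ⟨by rw [hQa]; exact Finset.mem_insert_self a P, haP⟩)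
    rw [hbspec i₀, Finset.mem_singleton] at hmem
    exact hmem.symm
  have haCm : a ∉ Cm := fun h => haP (hCmP h)
  have hbCpCm : ∀ i, i ≠ i₀ → b i ∈ Cp \ Cm := by
    intro i hi
    obtain ⟨hCmQ, hQCp⟩ := hedge i hi
    rcases Finset.mem_symmDiff.mp (hbmem i) with ⟨h1, h2⟩ | ⟨h1, h2⟩
    · exact Finset.mem_sdiff.mpr ⟨hPCp h1, fun h => h2 (hCmQ h)⟩
    · exact Finset.mem_sdiff.mpr ⟨hQCp h1, fun h => h2 (hCmP h)⟩
  have hcardCpCm : (Cp \ Cm).card = k - 1 := by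
    rw [Finset.card_sdiff_of_subset hCmCp, hcard]; omega
  have haCp : a ∉ Cp := by
    intro haCp
    have hsub : Finset.univ.image b ⊆ Cp \ Cm := by
      intro x hx
      obtain ⟨i, _, rfl⟩ := Finset.mem_image.mp hx
      by_cases hi : i = i₀
      · subst hi; rw [hba]; exact Finset.mem_sdiff.mpr ⟨haCp, haCm⟩
      · exact hbCpCm i hi
    have hle := Finset.card_le_card hsub
    rw [Finset.card_image_of_injective _ hbinj, Finset.card_univ, Fintype.card_fin,
      hcardCpCm] at hle
    omega
  have hcover : ∀ α, α ∈ P → α ∉ Cm → ∃ j, j ≠ i₀ ∧ α ∉ Q j := by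
    intro α hαP hαCm
    have hsub : (Finset.univ.erase i₀).image b ⊆ Cp \ Cm := by
      intro x hx
      obtain ⟨i, hi, rfl⟩ := Finset.mem_image.mp hx
      exact hbCpCm i (Finset.ne_of_mem_erase hi)
    have hcardim : ((Finset.univ.erase i₀).image b).card = k - 1 := by
      rw [Finset.card_image_of_injective _ hbinj,
        Finset.card_erase_of_mem (Finset.mem_univ _), Finset.card_univ, Fintype.card_fin]
    have heq : (Finset.univ.erase i₀).image b = Cp \ Cm :=
      Finset.eq_of_subset_of_card_le hsub (by rw [hcardim, hcardCpCm])
    have hαin : α ∈ (Finset.univ.erase i₀).image b := by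
      rw [heq]; exact Finset.mem_sdiff.mpr ⟨hPCp hαP, hαCm⟩
    obtain ⟨j, hj, hbj⟩ := Finset.mem_image.mp hαin
    refine ⟨j, Finset.ne_of_mem_erase hj, ?_⟩
    have hmem : α ∈ symmDiff P (Q j) := hbj ▸ hbmem j
    rcases Finset.mem_symmDiff.mp hmem with ⟨_, h2⟩ | ⟨_, h2⟩
    · exact h2
    · exact absurd hαP h2
  have hQi₀ : insert a P ∈ Pols := hQa ▸ hQ i₀
  have key : ∀ n (S : Finset A), (P \ S).card ≤ n → Cm ⊆ S → S ⊆ Cp → insert a S ∈ Pols := by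
    intro n
    induction n with
    | zero =>
      intro S hcardS hCmS hSCp
      have hPS : P ⊆ S := by
        rw [← Finset.sdiff_eq_empty_iff_subset]
        exact Finset.card_eq_zero.mp (Nat.le_zero.mp hcardS)
      exact hUp P S a hP (hint S hCmS hSCp) hPS hQi₀
    | succ n ih =>
      intro S hcardS hCmS hSCp
      by_cases hPS : P ⊆ S
      · exact hUp P S a hP (hint S hCmS hSCp) hPS hQi₀
      · obtain ⟨α, hαmem⟩ := Finset.nonempty_iff_ne_empty.mpr
          (fun h => hPS (Finset.sdiff_eq_empty_iff_subset.mp h))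
        obtain ⟨hαP, hαS⟩ := Finset.mem_sdiff.mp hαmem
        have hαCm : α ∉ Cm := fun h => hαS (hCmS h)
        obtain ⟨j, hjne, hαQj⟩ := hcover α hαP hαCm
        obtain ⟨j', hj'1, hj'2⟩ : ∃ j' : Fin k, j' ≠ j ∧ j' ≠ i₀ := by
          have h2 : ({j, i₀} : Finset (Fin k)).card ≤ 2 :=
            le_trans (Finset.card_insert_le _ _) (by simp)
          have hne : (Finset.univ \ ({j, i₀} : Finset (Fin k))).Nonempty := by
            apply Finset.card_pos.mp
            rw [Finset.card_sdiff_of_subset (Finset.subset_univ _), Finset.card_univ, Fintype.card_fin]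
            omega
          obtain ⟨j', hj'⟩ := hne
          rw [Finset.mem_sdiff, Finset.mem_insert, Finset.mem_singleton] at hj'
          exact ⟨j', fun h => hj'.2 (Or.inl h), fun h => hj'.2 (Or.inr h)⟩
        obtain ⟨Dm, Dp, hDm, hDp, hDmDp, hDcard, hDint, hDmP, hPDp, hDedge⟩ := hsubcubes j'
        have haDp : a ∈ Dp := (hDedge i₀ (Ne.symm hj'2)).2
          (by rw [hQa]; exact Finset.mem_insert_self a P)
        have hQjDm : Dm ⊆ Q j := (hDedge j (Ne.symm hj'1)).1
        have hQjDp : Q j ⊆ Dp := (hDedge j (Ne.symm hj'1)).2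
        have hiaQj : insert a (Q j) ∈ Pols :=
          hDint _ (hQjDm.trans (Finset.subset_insert _ _)) (Finset.insert_subset haDp hQjDp)
        have hQjCp : Q j ⊆ Cp := (hedge j hjne).2
        have hSPols : S ∈ Pols := hint S hCmS hSCp
        have hQjS : Q j ∪ S ∈ Pols := hUnion (Q j) S Cp (hQ j) hSPols hCp hQjCp hSCp
        have hY : insert a (Q j ∪ S) ∈ Pols :=
          hUp (Q j) (Q j ∪ S) a (hQ j) hQjS Finset.subset_union_left hiaQj
        have hX : insert a (insert α S) ∈ Pols := by
          apply ih
          · have hsd : P \ insert α S = (P \ S).erase α := by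
              ext x
              simp only [Finset.mem_sdiff, Finset.mem_insert, Finset.mem_erase]
              tauto
            rw [hsd, Finset.card_erase_of_mem hαmem]
            omega
          · exact hCmS.trans (Finset.subset_insert _ _)
          · exact Finset.insert_subset (hPCp hαP) hSCp
        have hXY : insert a (insert α S) ∩ insert a (Q j ∪ S) ∈ Pols := by
          apply hInter _ _ S hX hY hSPols
          · exact (Finset.subset_insert _ _).trans (Finset.subset_insert _ _)
          · exact Finset.subset_union_right.trans (Finset.subset_insert _ _)
        have heq : insert a (insert α S) ∩ insert a (Q j ∪ S) = insert a S := by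
          ext x
          simp only [Finset.mem_inter, Finset.mem_insert, Finset.mem_union]
          constructor
          · rintro ⟨(rfl | rfl | hx), h2⟩
            · exact Or.inl rfl
            · rcases h2 with rfl | hx | hx
              · exact Or.inl rfl
              · exact absurd hx hαQj
              · exact absurd hx hαS
            · exact Or.inr hx
          · rintro (rfl | hx)
            · exact ⟨Or.inl rfl, Or.inl rfl⟩
            · exact ⟨Or.inr (Or.inr hx), Or.inr (Or.inr hx)⟩
        rw [heq] at hXY
        exact hXY
  have hiaCp : insert a Cp ∈ Pols := hUp P Cp a hP hCp hPCp hQi₀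
  apply hnocube
  refine ⟨Cm, insert a Cp, hCm, hiaCp, hCmCp.trans (Finset.subset_insert _ _), ?_, ?_,
    hCmP, hPCp.trans (Finset.subset_insert _ _), ?_⟩
  · rw [Finset.card_insert_of_notMem haCp, hcard]; omega
  · intro R hR1 hR2
    by_cases haR : a ∈ R
    · have hsub : R.erase a ⊆ Cp := by
        intro x hx
        obtain ⟨hxne, hxR⟩ := Finset.mem_erase.mp hx
        rcases Finset.mem_insert.mp (hR2 hxR) with rfl | h
        · exact absurd rfl hxne
        · exact h
      have hCmR : Cm ⊆ R.erase a := fun x hx =>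
        Finset.mem_erase.mpr ⟨fun h => haCm (h ▸ hx), hR1 hx⟩
      have hk' := key (P \ R.erase a).card (R.erase a) le_rfl hCmR hsub
      rwa [Finset.insert_erase haR] at hk'
    · apply hint R hR1
      intro x hx
      rcases Finset.mem_insert.mp (hR2 hx) with rfl | h
      · exact absurd hx haR
      · exact h
  · intro i
    by_cases hi : i = i₀
    · subst hi
      rw [hQa]
      exact ⟨hCmP.trans (Finset.subset_insert _ _), Finset.insert_subset_insert a hPCp⟩
    · exact ⟨(hedge i hi).1, (hedge i hi).2.trans (Finset.subset_insert _ _)⟩
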